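/- arXiv:1811.10752 — 2 statements merged into one kernel-verified Lean document; each statement's English description precedes it below -/
import Mathlib

section
/- Let B be a deterministic decision tree on inputs from {0,1}^m (i.e., t = 1) and let Q be a consistent distribution over pairs (μ0, μ1) of distributions on {0,1}^m. Then (B,Q) is full (i.e., Σ_v Δ(v)R(v) = 1 for every (μ0,μ1) ∈ supp(Q)) if and only if the query process P(B,Q) queries the input bit z with probability 1; moreover, if (B,Q) is full then χ(B,Q) = E[N_1(B, 1, Q)], the expected number of simulated queries made before z is queried. -/
open Finset

inductive DTree (ι : Type) (S : Type) where
  | leaf : S → DTree ι S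
  | node : ι → DTree ι S → DTree ι S → DTree ι S

namespace DTree

/-- Evaluate a deterministic decision tree on an input. -/
def eval {ι S : Type} : DTree ι S → (ι → Bool) → S
  | leaf s, _ => s
  | node i t0 t1, x => if x i then t1.eval x else t0.eval x

/-- The depth (worst-case number of queries) of a decision tree. -/
def depth {ι S : Type} : DTree ι S → ℕ
  | leaf _ => 0
  | node _ t0 t1 => max t0.depth t1.depth + 1

/-- The number of queries a decision tree makes on a given input. -/
def queries {ι S : Type} : DTree ι S → (ι → Bool) → ℕ
  | leaf _, _ => 0
  | node i t0 t1, x => (if x i then t1.queries x else t0.queries x) + 1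

end DTree

/-- A probability distribution on a finite type, as a nonnegative real weight function summing to 1. -/
def IsDist {γ : Type} [Fintype γ] (μ : γ → ℝ) : Prop :=
  (∀ x, 0 ≤ μ x) ∧ ∑ x, μ x = 1

/-- The support of `μ` is contained in `A`. -/
def SuppIn {γ : Type} [Fintype γ] (μ : γ → ℝ) (A : Set γ) : Prop :=
  ∀ x, μ x ≠ 0 → x ∈ A

/-- `g⁻¹(b)` for a partial Boolean function given as a relation. -/
def preim {m : ℕ} (g : Set ((Fin m → Bool) × Bool)) (b : Bool) : Set (Fin m → Bool) :=
  {x | (x, b) ∈ g ∧ (x, !b) ∉ g}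

/-- `x` is a valid input of the partial Boolean function `g`. -/
def ValidIn {m : ℕ} (g : Set ((Fin m → Bool) × Bool)) (x : Fin m → Bool) : Prop :=
  x ∈ preim g false ∨ x ∈ preim g true

/-- A deterministic decision tree computes the partial Boolean function `g`. -/
def Computes {m : ℕ} (T : DTree (Fin m) Bool) (g : Set ((Fin m → Bool) × Bool)) : Prop :=
  ∀ b : Bool, ∀ x ∈ preim g b, T.eval x = b

/-- The paper's convention for partial Boolean functions: for every invalid input `y`, both
`(y,0)` and `(y,1)` belong to the relation (so that any output is accepted on invalid inputs).
`totalize g` adds all such pairs; it has the same valid inputs and the same `g⁻¹(b)` as `g`. -/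
def totalize {m : ℕ} (g : Set ((Fin m → Bool) × Bool)) : Set ((Fin m → Bool) × Bool) :=
  {p | p ∈ g ∨ ¬ ValidIn g p.1}

/-- Probability that coordinate `j` equals `b` under `μ`. -/
noncomputable def prb {m : ℕ} (μ : (Fin m → Bool) → ℝ) (j : Fin m) (b : Bool) : ℝ :=
  ∑ x, if x j = b then μ x else 0

/-- `μ` conditioned on coordinate `j` being equal to `b` (zero if the event has probability zero). -/
noncomputable def condD {m : ℕ} (μ : (Fin m → Bool) → ℝ) (j : Fin m) (b : Bool) :
    (Fin m → Bool) → ℝ :=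
  fun x => if x j = b then μ x / prb μ j b else 0

/-- `chiW T μ0 μ1 = (Σ_v Δ(v)R(v), Σ_v d_T(v)Δ(v)R(v))`, where at a node `v` querying `j`,
`p_b(v)` is the probability that the queried bit is `0` under `μ_b` conditioned on reaching `v`,
`Δ(v) = |p_0(v) - p_1(v)|`, and `R(v)` is the product along the path to `v` of
`min` of the two conditional transition probabilities; the depth of the root is 1. -/
noncomputable def chiW {m : ℕ} {S : Type} :
    DTree (Fin m) S → ((Fin m → Bool) → ℝ) → ((Fin m → Bool) → ℝ) → ℝ × ℝ
  | .leaf _, _, _ => (0, 0)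
  | .node j t0 t1, μ0, μ1 =>
    let p0 := prb μ0 j false
    let p1 := prb μ1 j false
    let r0 := chiW t0 (condD μ0 j false) (condD μ1 j false)
    let r1 := chiW t1 (condD μ0 j true) (condD μ1 j true)
    (|p0 - p1| + min p0 p1 * r0.1 + min (1 - p0) (1 - p1) * r1.1,
     |p0 - p1| + min p0 p1 * r0.1 + min (1 - p0) (1 - p1) * r1.1
       + min p0 p1 * r0.2 + min (1 - p0) (1 - p1) * r1.2)

/-- The conflict complexity `χ(T,(μ0,μ1)) = Σ_v d_T(v)·Δ(v)·R(v)` of a tree with respect to a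
pair of distributions. -/
noncomputable def chi {m : ℕ} {S : Type} (T : DTree (Fin m) S)
    (μ0 μ1 : (Fin m → Bool) → ℝ) : ℝ :=
  (chiW T μ0 μ1).2

/-- `(T,(μ0,μ1))` is full: `Σ_v Δ(v)·R(v) = 1`. -/
def FullPair {m : ℕ} {S : Type} (T : DTree (Fin m) S)
    (μ0 μ1 : (Fin m → Bool) → ℝ) : Prop :=
  (chiW T μ0 μ1).1 = 1

/-- The probability that the query process `P(B,Q)` run on `z` (with current per-block states
`st`) never queries the input bit `z` of block 1 (single-block version, i.e., reaches a leaf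
with the block still in the unqueried state). -/
noncomputable def noQueryProb {m : ℕ} {S : Type} :
    DTree (Fin m) S → ((Fin m → Bool) → ℝ) → ((Fin m → Bool) → ℝ) → ℝ
  | .leaf _, _, _ => 1
  | .node j t0 t1, μ0, μ1 =>
    min (prb μ0 j false) (prb μ1 j false) *
      noQueryProb t0 (condD μ0 j false) (condD μ1 j false)
    + min (1 - prb μ0 j false) (1 - prb μ1 j false) *
      noQueryProb t1 (condD μ0 j true) (condD μ1 j true)

/-- Expected number of simulated queries `N_1` made by the single-block query process before the
input bit `z` is queried (counting the query at which `z` is queried, and all queries if `z` is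
never queried). -/
noncomputable def ENq {m : ℕ} {S : Type} :
    DTree (Fin m) S → ((Fin m → Bool) → ℝ) → ((Fin m → Bool) → ℝ) → ℝ
  | .leaf _, _, _ => 0
  | .node j t0 t1, μ0, μ1 =>
    1 + min (prb μ0 j false) (prb μ1 j false) *
      ENq t0 (condD μ0 j false) (condD μ1 j false)
    + min (1 - prb μ0 j false) (1 - prb μ1 j false) *
      ENq t1 (condD μ0 j true) (condD μ1 j true)

/-- A subdistribution: nonnegative weights with total mass at most 1. -/
def SubDist {m : ℕ} (μ : (Fin m → Bool) → ℝ) : Prop :=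
  (∀ x, 0 ≤ μ x) ∧ ∑ x, μ x ≤ 1

lemma prb_nonneg {m : ℕ} {μ : (Fin m → Bool) → ℝ} (h : ∀ x, 0 ≤ μ x) (j : Fin m) (b : Bool) :
    0 ≤ prb μ j b := by
  apply Finset.sum_nonneg
  intro x _
  split
  · exact h x
  · exact le_rfl

lemma prb_le_one {m : ℕ} {μ : (Fin m → Bool) → ℝ} (h : SubDist μ) (j : Fin m) (b : Bool) :
    prb μ j b ≤ 1 := by
  refine le_trans ?_ h.2
  apply Finset.sum_le_sum
  intro x _
  split
  · exact le_rfl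
  · exact h.1 x

lemma condD_subDist {m : ℕ} {μ : (Fin m → Bool) → ℝ} (h : SubDist μ) (j : Fin m) (b : Bool) :
    SubDist (condD μ j b) := by
  constructor
  · intro x
    unfold condD
    split
    · exact div_nonneg (h.1 x) (prb_nonneg h.1 j b)
    · exact le_rfl
  · have hs : ∑ x, condD μ j b x = prb μ j b / prb μ j b := by
      have h1 : ∀ x : Fin m → Bool, condD μ j b x
          = (if x j = b then μ x else 0) / prb μ j b := by
        intro x
        unfold condD
        split <;> simp
      calc ∑ x, condD μ j b x
          = ∑ x, (if x j = b then μ x else 0) / prb μ j b :=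
            Finset.sum_congr rfl (fun x _ => h1 x)
        _ = prb μ j b / prb μ j b := by rw [← Finset.sum_div]; rfl
    rw [hs]
    exact div_self_le_one _

lemma min_one_sub {p0 p1 : ℝ} : min (1 - p0) (1 - p1) = 1 - max p0 p1 := by
  rcases le_total p0 p1 with h | h
  · rw [max_eq_right h, min_eq_right (by linarith)]
  · rw [max_eq_left h, min_eq_left (by linarith)]

/-- Key identity: `Σ_v Δ(v)R(v) + Pr[z never queried] = 1`, unconditionally. -/
lemma chiW_fst_add_noQueryProb {m : ℕ} {S : Type} (T : DTree (Fin m) S) :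
    ∀ μ0 μ1, (chiW T μ0 μ1).1 + noQueryProb T μ0 μ1 = 1 := by
  induction T with
  | leaf s => intro μ0 μ1; simp [chiW, noQueryProb]
  | node j t0 t1 ih0 ih1 =>
    intro μ0 μ1
    have h0 := ih0 (condD μ0 j false) (condD μ1 j false)
    have h1 := ih1 (condD μ0 j true) (condD μ1 j true)
    have habs : max (prb μ0 j false) (prb μ1 j false)
        - min (prb μ0 j false) (prb μ1 j false)
        = |prb μ0 j false - prb μ1 j false| := by
      rw [abs_sub_comm]; exact max_sub_min_eq_abs _ _
    have hmin : min (1 - prb μ0 j false) (1 - prb μ1 j false)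
        = 1 - max (prb μ0 j false) (prb μ1 j false) := min_one_sub
    have m0 : min (prb μ0 j false) (prb μ1 j false)
        * noQueryProb t0 (condD μ0 j false) (condD μ1 j false)
        = min (prb μ0 j false) (prb μ1 j false)
          - min (prb μ0 j false) (prb μ1 j false)
            * (chiW t0 (condD μ0 j false) (condD μ1 j false)).1 := by
      have e : noQueryProb t0 (condD μ0 j false) (condD μ1 j false)
          = 1 - (chiW t0 (condD μ0 j false) (condD μ1 j false)).1 := by linarith
      rw [e]; ring
    have m1 : min (1 - prb μ0 j false) (1 - prb μ1 j false)
        * noQueryProb t1 (condD μ0 j true) (condD μ1 j true)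
        = min (1 - prb μ0 j false) (1 - prb μ1 j false)
          - min (1 - prb μ0 j false) (1 - prb μ1 j false)
            * (chiW t1 (condD μ0 j true) (condD μ1 j true)).1 := by
      have e : noQueryProb t1 (condD μ0 j true) (condD μ1 j true)
          = 1 - (chiW t1 (condD μ0 j true) (condD μ1 j true)).1 := by linarith
      rw [e]; ring
    simp only [chiW, noQueryProb]
    linarith [habs, hmin, m0, m1]

lemma noQueryProb_mem {m : ℕ} {S : Type} (T : DTree (Fin m) S) :
    ∀ μ0 μ1, SubDist μ0 → SubDist μ1 →
      0 ≤ noQueryProb T μ0 μ1 ∧ noQueryProb T μ0 μ1 ≤ 1 := by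
  induction T with
  | leaf s => intro μ0 μ1 _ _; simp [noQueryProb]
  | node j t0 t1 ih0 ih1 =>
    intro μ0 μ1 hμ0 hμ1
    have h0 := ih0 _ _ (condD_subDist hμ0 j false) (condD_subDist hμ1 j false)
    have h1 := ih1 _ _ (condD_subDist hμ0 j true) (condD_subDist hμ1 j true)
    have hp00 := prb_nonneg hμ0.1 j false
    have hp10 := prb_nonneg hμ1.1 j false
    have hp01 := prb_le_one hμ0 j false
    have hp11 := prb_le_one hμ1 j false
    have ha : (0:ℝ) ≤ min (prb μ0 j false) (prb μ1 j false) := le_min hp00 hp10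
    have hb : (0:ℝ) ≤ min (1 - prb μ0 j false) (1 - prb μ1 j false) := by
      apply le_min <;> linarith
    constructor
    · simp only [noQueryProb]
      have := mul_nonneg ha h0.1
      have := mul_nonneg hb h1.1
      linarith
    · simp only [noQueryProb]
      have t1' : min (prb μ0 j false) (prb μ1 j false) *
          noQueryProb t0 (condD μ0 j false) (condD μ1 j false)
          ≤ min (prb μ0 j false) (prb μ1 j false) := by
        nlinarith [h0.2]
      have t2' : min (1 - prb μ0 j false) (1 - prb μ1 j false) *
          noQueryProb t1 (condD μ0 j true) (condD μ1 j true)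
          ≤ min (1 - prb μ0 j false) (1 - prb μ1 j false) := by
        nlinarith [h1.2]
      have : min (prb μ0 j false) (prb μ1 j false)
          + min (1 - prb μ0 j false) (1 - prb μ1 j false) ≤ 1 := by
        have := min_le_left (prb μ0 j false) (prb μ1 j false)
        have := min_le_left (1 - prb μ0 j false) (1 - prb μ1 j false)
        linarith
      linarith

/-- The gap `E[N_1] - χ` is between `0` and `depth · Pr[z never queried]`. -/
lemma ENq_sub_chi_bound {m : ℕ} {S : Type} (T : DTree (Fin m) S) :
    ∀ μ0 μ1, SubDist μ0 → SubDist μ1 →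
      0 ≤ ENq T μ0 μ1 - (chiW T μ0 μ1).2 ∧
      ENq T μ0 μ1 - (chiW T μ0 μ1).2 ≤ (T.depth : ℝ) * noQueryProb T μ0 μ1 := by
  induction T with
  | leaf s => intro μ0 μ1 _ _; simp [ENq, chiW, DTree.depth, noQueryProb]
  | node j t0 t1 ih0 ih1 =>
    intro μ0 μ1 hμ0 hμ1
    have h0 := ih0 _ _ (condD_subDist hμ0 j false) (condD_subDist hμ1 j false)
    have h1 := ih1 _ _ (condD_subDist hμ0 j true) (condD_subDist hμ1 j true)
    have n0 := noQueryProb_mem t0 _ _ (condD_subDist hμ0 j false) (condD_subDist hμ1 j false)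
    have n1 := noQueryProb_mem t1 _ _ (condD_subDist hμ0 j true) (condD_subDist hμ1 j true)
    have k0 := chiW_fst_add_noQueryProb t0 (condD μ0 j false) (condD μ1 j false)
    have k1 := chiW_fst_add_noQueryProb t1 (condD μ0 j true) (condD μ1 j true)
    have hp00 := prb_nonneg hμ0.1 j false
    have hp10 := prb_nonneg hμ1.1 j false
    have hp01 := prb_le_one hμ0 j false
    have hp11 := prb_le_one hμ1 j false
    have ha : (0:ℝ) ≤ min (prb μ0 j false) (prb μ1 j false) := le_min hp00 hp10
    have hb : (0:ℝ) ≤ min (1 - prb μ0 j false) (1 - prb μ1 j false) := by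
      apply le_min <;> linarith
    have habs : max (prb μ0 j false) (prb μ1 j false)
        - min (prb μ0 j false) (prb μ1 j false)
        = |prb μ0 j false - prb μ1 j false| := by
      rw [abs_sub_comm]; exact max_sub_min_eq_abs _ _
    have hmin : min (1 - prb μ0 j false) (1 - prb μ1 j false)
        = 1 - max (prb μ0 j false) (prb μ1 j false) := min_one_sub
    have m0 : min (prb μ0 j false) (prb μ1 j false)
        * noQueryProb t0 (condD μ0 j false) (condD μ1 j false)
        = min (prb μ0 j false) (prb μ1 j false)
          - min (prb μ0 j false) (prb μ1 j false)
            * (chiW t0 (condD μ0 j false) (condD μ1 j false)).1 := by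
      have e : noQueryProb t0 (condD μ0 j false) (condD μ1 j false)
          = 1 - (chiW t0 (condD μ0 j false) (condD μ1 j false)).1 := by linarith
      rw [e]; ring
    have m1 : min (1 - prb μ0 j false) (1 - prb μ1 j false)
        * noQueryProb t1 (condD μ0 j true) (condD μ1 j true)
        = min (1 - prb μ0 j false) (1 - prb μ1 j false)
          - min (1 - prb μ0 j false) (1 - prb μ1 j false)
            * (chiW t1 (condD μ0 j true) (condD μ1 j true)).1 := by
      have e : noQueryProb t1 (condD μ0 j true) (condD μ1 j true)
          = 1 - (chiW t1 (condD μ0 j true) (condD μ1 j true)).1 := by linarith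
      rw [e]; ring
    have hkey : ENq (DTree.node j t0 t1) μ0 μ1 - (chiW (DTree.node j t0 t1) μ0 μ1).2
        = (min (prb μ0 j false) (prb μ1 j false)
            * noQueryProb t0 (condD μ0 j false) (condD μ1 j false)
          + min (1 - prb μ0 j false) (1 - prb μ1 j false)
            * noQueryProb t1 (condD μ0 j true) (condD μ1 j true))
          + min (prb μ0 j false) (prb μ1 j false)
            * (ENq t0 (condD μ0 j false) (condD μ1 j false)
              - (chiW t0 (condD μ0 j false) (condD μ1 j false)).2)
          + min (1 - prb μ0 j false) (1 - prb μ1 j false)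
            * (ENq t1 (condD μ0 j true) (condD μ1 j true)
              - (chiW t1 (condD μ0 j true) (condD μ1 j true)).2) := by
      simp only [ENq, chiW]
      linarith [habs, hmin, m0, m1,
        mul_sub (min (prb μ0 j false) (prb μ1 j false))
          (ENq t0 (condD μ0 j false) (condD μ1 j false))
          (chiW t0 (condD μ0 j false) (condD μ1 j false)).2,
        mul_sub (min (1 - prb μ0 j false) (1 - prb μ1 j false))
          (ENq t1 (condD μ0 j true) (condD μ1 j true))
          (chiW t1 (condD μ0 j true) (condD μ1 j true)).2]
    have hnq : noQueryProb (DTree.node j t0 t1) μ0 μ1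
        = min (prb μ0 j false) (prb μ1 j false)
            * noQueryProb t0 (condD μ0 j false) (condD μ1 j false)
          + min (1 - prb μ0 j false) (1 - prb μ1 j false)
            * noQueryProb t1 (condD μ0 j true) (condD μ1 j true) := rfl
    have hd0 : (t0.depth : ℝ) ≤ (max t0.depth t1.depth : ℕ) := by
      exact_mod_cast le_max_left _ _
    have hd1 : (t1.depth : ℝ) ≤ (max t0.depth t1.depth : ℕ) := by
      exact_mod_cast le_max_right _ _
    have hdepth : ((DTree.node j t0 t1).depth : ℝ) = ((max t0.depth t1.depth : ℕ) : ℝ) + 1 := by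
      simp [DTree.depth]
    constructor
    · rw [hkey]
      have := mul_nonneg ha h0.1
      have := mul_nonneg hb h1.1
      have := mul_nonneg ha n0.1
      have := mul_nonneg hb n1.1
      linarith
    · rw [hkey, hnq, hdepth]
      have e0 : min (prb μ0 j false) (prb μ1 j false)
          * (ENq t0 (condD μ0 j false) (condD μ1 j false)
            - (chiW t0 (condD μ0 j false) (condD μ1 j false)).2)
          ≤ min (prb μ0 j false) (prb μ1 j false)
            * ((max t0.depth t1.depth : ℕ) *
              noQueryProb t0 (condD μ0 j false) (condD μ1 j false)) := by
        apply mul_le_mul_of_nonneg_left _ ha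
        calc ENq t0 (condD μ0 j false) (condD μ1 j false)
              - (chiW t0 (condD μ0 j false) (condD μ1 j false)).2
            ≤ (t0.depth : ℝ) * _ := h0.2
          _ ≤ _ := mul_le_mul_of_nonneg_right hd0 n0.1
      have e1 : min (1 - prb μ0 j false) (1 - prb μ1 j false)
          * (ENq t1 (condD μ0 j true) (condD μ1 j true)
            - (chiW t1 (condD μ0 j true) (condD μ1 j true)).2)
          ≤ min (1 - prb μ0 j false) (1 - prb μ1 j false)
            * ((max t0.depth t1.depth : ℕ) *
              noQueryProb t1 (condD μ0 j true) (condD μ1 j true)) := by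
        apply mul_le_mul_of_nonneg_left _ hb
        calc ENq t1 (condD μ0 j true) (condD μ1 j true)
              - (chiW t1 (condD μ0 j true) (condD μ1 j true)).2
            ≤ (t1.depth : ℝ) * _ := h1.2
          _ ≤ _ := mul_le_mul_of_nonneg_right hd1 n1.1
      nlinarith [e0, e1, mul_nonneg ha n0.1, mul_nonneg hb n1.1]

/-- For a deterministic decision tree `B` on `{0,1}^m` (the case `t = 1`) and a
consistent distribution `Q` over pairs of distributions, `(B,Q)` is full (i.e.
`Σ_v Δ(v)R(v) = 1` for every pair in the support of `Q`) iff the query process `P(B,Q)` queries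
the input bit `z` with probability 1; moreover if `(B,Q)` is full then
`χ(B,Q) = E[N_1(B,1,Q)]`, the expected number of simulated queries made up to and including the
query of `z`. -/
theorem full_iff_queries_and_chi_eq_EN (m kQ : ℕ) (S : Type) (B : DTree (Fin m) S)
    (w : Fin kQ → ℝ) (M0 M1 : Fin kQ → ((Fin m → Bool) → ℝ))
    (hw : IsDist w) (hM : ∀ c, IsDist (M0 c) ∧ IsDist (M1 c))
    (hcons : ∀ c c' x, M0 c x ≠ 0 → M1 c' x = 0) :
    ((∀ c, w c ≠ 0 → FullPair B (M0 c) (M1 c)) ↔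
      ∑ c, w c * (1 - noQueryProb B (M0 c) (M1 c)) = 1) ∧
    ((∀ c, w c ≠ 0 → FullPair B (M0 c) (M1 c)) →
      ∑ c, w c * chi B (M0 c) (M1 c) = ∑ c, w c * ENq B (M0 c) (M1 c)) := by
  have hsub0 : ∀ c, SubDist (M0 c) := fun c => ⟨(hM c).1.1, le_of_eq (hM c).1.2⟩
  have hsub1 : ∀ c, SubDist (M1 c) := fun c => ⟨(hM c).2.1, le_of_eq (hM c).2.2⟩
  have hfull_iff : ∀ c, FullPair B (M0 c) (M1 c) ↔ noQueryProb B (M0 c) (M1 c) = 0 := by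
    intro c
    have := chiW_fst_add_noQueryProb B (M0 c) (M1 c)
    unfold FullPair
    constructor <;> intro h <;> linarith
  have hsum1 : ∑ c, w c * (1 - noQueryProb B (M0 c) (M1 c))
      = 1 - ∑ c, w c * noQueryProb B (M0 c) (M1 c) := by
    have : ∑ c, w c * (1 - noQueryProb B (M0 c) (M1 c))
        = ∑ c, (w c - w c * noQueryProb B (M0 c) (M1 c)) := by
      apply Finset.sum_congr rfl
      intro c _
      ring
    rw [this, Finset.sum_sub_distrib, hw.2]
  have hnonneg : ∀ c ∈ Finset.univ, (0:ℝ) ≤ w c * noQueryProb B (M0 c) (M1 c) := by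
    intro c _
    exact mul_nonneg (hw.1 c) (noQueryProb_mem B _ _ (hsub0 c) (hsub1 c)).1
  constructor
  · constructor
    · intro hF
      have hz : ∑ c, w c * noQueryProb B (M0 c) (M1 c) = 0 := by
        apply Finset.sum_eq_zero
        intro c _
        rcases eq_or_ne (w c) 0 with h | h
        · simp [h]
        · rw [(hfull_iff c).1 (hF c h), mul_zero]
      rw [hsum1, hz]; ring
    · intro hE c hc
      rw [hfull_iff]
      have hz : ∑ c, w c * noQueryProb B (M0 c) (M1 c) = 0 := by
        rw [hsum1] at hE; linarith
      have := (Finset.sum_eq_zero_iff_of_nonneg hnonneg).1 hz c (Finset.mem_univ c)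
      rcases mul_eq_zero.1 this with h | h
      · exact absurd h hc
      · exact h
  · intro hF
    apply Finset.sum_congr rfl
    intro c _
    rcases eq_or_ne (w c) 0 with h | h
    · simp [h]
    · have hnq : noQueryProb B (M0 c) (M1 c) = 0 := (hfull_iff c).1 (hF c h)
      have hD := ENq_sub_chi_bound B (M0 c) (M1 c) (hsub0 c) (hsub1 c)
      rw [hnq, mul_zero] at hD
      have : chi B (M0 c) (M1 c) = ENq B (M0 c) (M1 c) := by
        unfold chi; linarith [hD.1, hD.2]
      rw [this]
end

section
/- Let μ0, μ1 be distributions on {0,1}^m with supp(μ_b) ⊆ g⁻¹(b) for a partial Boolean function g, and let B be a deterministic decision tree with (B,(μ0,μ1)) full and χ(B,(μ0,μ1)) = min_T χ(T,(μ0,μ1)) (an optimal tree for (μ0,μ1)). Let v be any node of B whose subcube has nonzero probability under both μ0 and μ1, and let μ0' = μ0 | v and μ1' = μ1 | v. Then the subtree B_v of B rooted at v is an optimal decision tree for (μ0', μ1'), i.e., χ(B_v,(μ0',μ1')) = min_T χ(T,(μ0',μ1')). -/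
open Finset

/-- `p` is a valid path (sequence of query answers) from the root of the tree. -/
def isPath {ι S : Type} : List Bool → DTree ι S → Prop
  | [], _ => True
  | _ :: _, .leaf _ => False
  | b :: p, .node _ t0 t1 => isPath p (if b then t1 else t0)

/-- The subtree rooted at the node reached by following the path `p`. -/
def subAt {ι S : Type} : List Bool → DTree ι S → DTree ι S
  | [], T => T
  | _ :: _, .leaf s => .leaf s
  | b :: p, .node _ t0 t1 => subAt p (if b then t1 else t0)

/-- The distribution `μ` conditioned on the subcube of inputs following the path `p` in the tree. -/
noncomputable def condAlong {m : ℕ} {S : Type} :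
    List Bool → DTree (Fin m) S → ((Fin m → Bool) → ℝ) → ((Fin m → Bool) → ℝ)
  | [], _, μ => μ
  | _ :: _, .leaf _, μ => μ
  | b :: p, .node j t0 t1, μ => condAlong p (if b then t1 else t0) (condD μ j b)

/-- The probability under `μ` of the subcube of inputs following the path `p` in the tree. -/
noncomputable def reachP {m : ℕ} {S : Type} :
    List Bool → DTree (Fin m) S → ((Fin m → Bool) → ℝ) → ℝ
  | [], _, _ => 1
  | _ :: _, .leaf _, _ => 0
  | b :: p, .node j t0 t1, μ => prb μ j b * reachP p (if b then t1 else t0) (condD μ j b)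

section Aux

/-- Subprobability distribution: nonnegative weights summing to at most 1. -/
def SubD {m : ℕ} (μ : (Fin m → Bool) → ℝ) : Prop :=
  (∀ x, 0 ≤ μ x) ∧ ∑ x, μ x ≤ 1

lemma prb_le_sum {m : ℕ} {μ : (Fin m → Bool) → ℝ} (h : ∀ x, 0 ≤ μ x)
    (j : Fin m) (b : Bool) : prb μ j b ≤ ∑ x, μ x := by
  apply Finset.sum_le_sum; intro x _; split_ifs; exacts [le_rfl, h x]

lemma prb_false_add_true {m : ℕ} (μ : (Fin m → Bool) → ℝ) (j : Fin m) :
    prb μ j false + prb μ j true = ∑ x, μ x := by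
  unfold prb
  rw [← Finset.sum_add_distrib]
  apply Finset.sum_congr rfl
  intro x _
  cases hx : x j <;> simp

lemma subD_condD {m : ℕ} {μ : (Fin m → Bool) → ℝ} (h : SubD μ)
    (j : Fin m) (b : Bool) : SubD (condD μ j b) := by
  constructor
  · intro x
    unfold condD
    split_ifs with hx
    · exact div_nonneg (h.1 x) (prb_nonneg h.1 j b)
    · exact le_rfl
  · have : ∑ x, condD μ j b x = prb μ j b / prb μ j b := by
      unfold condD prb
      rw [Finset.sum_div]
      apply Finset.sum_congr rfl
      intro x _
      split_ifs <;> simp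
    rw [this]
    rcases eq_or_ne (prb μ j b) 0 with hz | hz
    · simp [hz]
    · rw [div_self hz]

lemma abs_min_id (p q : ℝ) : |p - q| + min p q + min (1 - p) (1 - q) = 1 := by
  rcases le_total p q with h | h
  · rw [abs_of_nonpos (by linarith), min_eq_left h, min_eq_right (by linarith)]; ring
  · rw [abs_of_nonneg (by linarith), min_eq_right h, min_eq_left (by linarith)]; ring

lemma chiW_bounds {m : ℕ} {S : Type} (T : DTree (Fin m) S) :
    ∀ μ0 μ1 : (Fin m → Bool) → ℝ, SubD μ0 → SubD μ1 →
    0 ≤ (chiW T μ0 μ1).1 ∧ (chiW T μ0 μ1).1 ≤ 1 ∧ 0 ≤ (chiW T μ0 μ1).2 := by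
  induction T with
  | leaf s => intro μ0 μ1 _ _; simp [chiW]
  | node j t0 t1 ih0 ih1 =>
    intro μ0 μ1 h0 h1
    obtain ⟨a0, a1, a2⟩ := ih0 _ _ (subD_condD h0 j false) (subD_condD h1 j false)
    obtain ⟨b0, b1, b2⟩ := ih1 _ _ (subD_condD h0 j true) (subD_condD h1 j true)
    have hp0 : 0 ≤ prb μ0 j false := prb_nonneg h0.1 j false
    have hp1 : 0 ≤ prb μ1 j false := prb_nonneg h1.1 j false
    have hq0 : prb μ0 j false ≤ 1 := le_trans (prb_le_sum h0.1 j false) h0.2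
    have hq1 : prb μ1 j false ≤ 1 := le_trans (prb_le_sum h1.1 j false) h1.2
    have hid := abs_min_id (prb μ0 j false) (prb μ1 j false)
    have hmin0 : 0 ≤ min (prb μ0 j false) (prb μ1 j false) := le_min hp0 hp1
    have hmin1 : 0 ≤ min (1 - prb μ0 j false) (1 - prb μ1 j false) :=
      le_min (by linarith) (by linarith)
    have habs : 0 ≤ |prb μ0 j false - prb μ1 j false| := abs_nonneg _
    simp only [chiW]
    refine ⟨by positivity, ?_, by positivity⟩
    nlinarith [mul_le_of_le_one_right hmin0 a1, mul_le_of_le_one_right hmin1 b1]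

lemma full_node {m : ℕ} {S : Type} {j : Fin m} {t0 t1 : DTree (Fin m) S}
    {μ0 μ1 : (Fin m → Bool) → ℝ} (h0 : SubD μ0) (h1 : SubD μ1)
    (hfull : FullPair (DTree.node j t0 t1) μ0 μ1) :
    min (prb μ0 j false) (prb μ1 j false) *
      (chiW t0 (condD μ0 j false) (condD μ1 j false)).1
      = min (prb μ0 j false) (prb μ1 j false) ∧
    min (1 - prb μ0 j false) (1 - prb μ1 j false) *
      (chiW t1 (condD μ0 j true) (condD μ1 j true)).1
      = min (1 - prb μ0 j false) (1 - prb μ1 j false) := by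
  obtain ⟨a0, a1, _⟩ := chiW_bounds t0 _ _ (subD_condD h0 j false) (subD_condD h1 j false)
  obtain ⟨b0, b1, _⟩ := chiW_bounds t1 _ _ (subD_condD h0 j true) (subD_condD h1 j true)
  have hp0 : 0 ≤ prb μ0 j false := prb_nonneg h0.1 j false
  have hp1 : 0 ≤ prb μ1 j false := prb_nonneg h1.1 j false
  have hq0 : prb μ0 j false ≤ 1 := le_trans (prb_le_sum h0.1 j false) h0.2
  have hq1 : prb μ1 j false ≤ 1 := le_trans (prb_le_sum h1.1 j false) h1.2
  have hid := abs_min_id (prb μ0 j false) (prb μ1 j false)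
  have hmin0 : 0 ≤ min (prb μ0 j false) (prb μ1 j false) := le_min hp0 hp1
  have hmin1 : 0 ≤ min (1 - prb μ0 j false) (1 - prb μ1 j false) :=
    le_min (by linarith) (by linarith)
  have hfu : |prb μ0 j false - prb μ1 j false|
      + min (prb μ0 j false) (prb μ1 j false) *
        (chiW t0 (condD μ0 j false) (condD μ1 j false)).1
      + min (1 - prb μ0 j false) (1 - prb μ1 j false) *
        (chiW t1 (condD μ0 j true) (condD μ1 j true)).1 = 1 := hfull
  constructor <;>
    nlinarith [mul_le_of_le_one_right hmin0 a1, mul_le_of_le_one_right hmin1 b1]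

end Aux

section Aux2

lemma opt_core {m : ℕ} (c0 c1 : (Fin m → Bool) → ℝ) (t : DTree (Fin m) Bool)
    (a K : ℝ) (ha : 0 < a) (Sbig : Set ℝ) (hbd : BddBelow Sbig)
    (hfull_t : FullPair t c0 c1)
    (hmem : ∀ T : DTree (Fin m) Bool, FullPair T c0 c1 →
      (1 + a * chi T c0 c1 + K) ∈ Sbig)
    (hval : sInf Sbig = 1 + a * chi t c0 c1 + K) :
    chi t c0 c1 = sInf { x : ℝ | ∃ T : DTree (Fin m) Bool,
      FullPair T c0 c1 ∧ x = chi T c0 c1 } := by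
  have hexch : ∀ T : DTree (Fin m) Bool, FullPair T c0 c1 →
      chi t c0 c1 ≤ chi T c0 c1 := by
    intro T hT
    have h1 : sInf Sbig ≤ 1 + a * chi T c0 c1 + K := csInf_le hbd (hmem T hT)
    rw [hval] at h1
    nlinarith
  apply le_antisymm
  · exact le_csInf ⟨chi t c0 c1, t, hfull_t, rfl⟩
      (fun x ⟨T, hT, hx⟩ => hx ▸ hexch T hT)
  · exact csInf_le ⟨chi t c0 c1, fun x ⟨T, hT, hx⟩ => hx ▸ hexch T hT⟩
      ⟨t, hfull_t, rfl⟩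

lemma step_lemma {m : ℕ} (j : Fin m) (t0 t1 : DTree (Fin m) Bool)
    (μ0 μ1 : (Fin m → Bool) → ℝ) (h0 : SubD μ0) (h1 : SubD μ1)
    (hfull : FullPair (DTree.node j t0 t1) μ0 μ1)
    (hopt : chi (DTree.node j t0 t1) μ0 μ1 =
      sInf { x : ℝ | ∃ T : DTree (Fin m) Bool, FullPair T μ0 μ1 ∧ x = chi T μ0 μ1 })
    (b : Bool) (hb0 : prb μ0 j b ≠ 0) (hb1 : prb μ1 j b ≠ 0) :
    FullPair (if b then t1 else t0) (condD μ0 j b) (condD μ1 j b) ∧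
    chi (if b then t1 else t0) (condD μ0 j b) (condD μ1 j b) =
      sInf { x : ℝ | ∃ T : DTree (Fin m) Bool,
        FullPair T (condD μ0 j b) (condD μ1 j b) ∧
        x = chi T (condD μ0 j b) (condD μ1 j b) } := by
  have hSbd : BddBelow { x : ℝ | ∃ T : DTree (Fin m) Bool,
      FullPair T μ0 μ1 ∧ x = chi T μ0 μ1 } := by
    refine ⟨0, fun x ⟨T, hT, hx⟩ => ?_⟩
    rw [hx]
    exact (chiW_bounds T μ0 μ1 h0 h1).2.2
  obtain ⟨hF, hT⟩ := full_node h0 h1 hfull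
  have hp0 : 0 ≤ prb μ0 j false := prb_nonneg h0.1 j false
  have hp1 : 0 ≤ prb μ1 j false := prb_nonneg h1.1 j false
  set P0 := prb μ0 j false with hP0
  set P1 := prb μ1 j false with hP1
  cases b with
  | false =>
    have ha : 0 < min P0 P1 :=
      lt_min (lt_of_le_of_ne hp0 (Ne.symm hb0)) (lt_of_le_of_ne hp1 (Ne.symm hb1))
    have hfullt0 : FullPair t0 (condD μ0 j false) (condD μ1 j false) :=
      mul_left_cancel₀ (ne_of_gt ha) (by rw [hF, mul_one])
    refine ⟨hfullt0, ?_⟩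
    apply opt_core _ _ _ (min P0 P1)
      (min (1 - P0) (1 - P1) * (chiW t1 (condD μ0 j true) (condD μ1 j true)).2)
      ha _ hSbd hfullt0
    · intro T hTf
      refine ⟨DTree.node j T t1, ?_, ?_⟩
      · show |P0 - P1| + min P0 P1 * (chiW T (condD μ0 j false) (condD μ1 j false)).1
          + min (1 - P0) (1 - P1) * (chiW t1 (condD μ0 j true) (condD μ1 j true)).1 = 1
        rw [hTf, hT, mul_one]
        exact abs_min_id P0 P1
      · show 1 + min P0 P1 * chi T (condD μ0 j false) (condD μ1 j false)
          + min (1 - P0) (1 - P1) * (chiW t1 (condD μ0 j true) (condD μ1 j true)).2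
          = chi (DTree.node j T t1) μ0 μ1
        show _ = |P0 - P1| + min P0 P1 * (chiW T (condD μ0 j false) (condD μ1 j false)).1
          + min (1 - P0) (1 - P1) * (chiW t1 (condD μ0 j true) (condD μ1 j true)).1
          + min P0 P1 * (chiW T (condD μ0 j false) (condD μ1 j false)).2
          + min (1 - P0) (1 - P1) * (chiW t1 (condD μ0 j true) (condD μ1 j true)).2
        rw [hTf, hT, mul_one, abs_min_id P0 P1]
        unfold chi
        ring
    · rw [← hopt]
      show chi (DTree.node j t0 t1) μ0 μ1 = _
      show |P0 - P1| + min P0 P1 * (chiW t0 (condD μ0 j false) (condD μ1 j false)).1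
          + min (1 - P0) (1 - P1) * (chiW t1 (condD μ0 j true) (condD μ1 j true)).1
          + min P0 P1 * (chiW t0 (condD μ0 j false) (condD μ1 j false)).2
          + min (1 - P0) (1 - P1) * (chiW t1 (condD μ0 j true) (condD μ1 j true)).2 = _
      rw [hF, hT, abs_min_id P0 P1]
      unfold chi
      ring
  | true =>
    have h10 : 0 < prb μ0 j true :=
      lt_of_le_of_ne (prb_nonneg h0.1 j true) (Ne.symm hb0)
    have h11 : 0 < prb μ1 j true :=
      lt_of_le_of_ne (prb_nonneg h1.1 j true) (Ne.symm hb1)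
    have hs0 : P0 + prb μ0 j true ≤ 1 := by
      rw [hP0, prb_false_add_true]; exact h0.2
    have hs1 : P1 + prb μ1 j true ≤ 1 := by
      rw [hP1, prb_false_add_true]; exact h1.2
    have ha : 0 < min (1 - P0) (1 - P1) :=
      lt_min (by linarith) (by linarith)
    have hfullt1 : FullPair t1 (condD μ0 j true) (condD μ1 j true) :=
      mul_left_cancel₀ (ne_of_gt ha) (by rw [hT, mul_one])
    refine ⟨hfullt1, ?_⟩
    apply opt_core _ _ _ (min (1 - P0) (1 - P1))
      (min P0 P1 * (chiW t0 (condD μ0 j false) (condD μ1 j false)).2)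
      ha _ hSbd hfullt1
    · intro T hTf
      refine ⟨DTree.node j t0 T, ?_, ?_⟩
      · show |P0 - P1| + min P0 P1 * (chiW t0 (condD μ0 j false) (condD μ1 j false)).1
          + min (1 - P0) (1 - P1) * (chiW T (condD μ0 j true) (condD μ1 j true)).1 = 1
        rw [hTf, hF, mul_one]
        exact abs_min_id P0 P1
      · show _ = |P0 - P1| + min P0 P1 * (chiW t0 (condD μ0 j false) (condD μ1 j false)).1
          + min (1 - P0) (1 - P1) * (chiW T (condD μ0 j true) (condD μ1 j true)).1
          + min P0 P1 * (chiW t0 (condD μ0 j false) (condD μ1 j false)).2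
          + min (1 - P0) (1 - P1) * (chiW T (condD μ0 j true) (condD μ1 j true)).2
        rw [hTf, hF, mul_one, abs_min_id P0 P1]
        unfold chi
        ring
    · rw [← hopt]
      show chi (DTree.node j t0 t1) μ0 μ1 = _
      show |P0 - P1| + min P0 P1 * (chiW t0 (condD μ0 j false) (condD μ1 j false)).1
          + min (1 - P0) (1 - P1) * (chiW t1 (condD μ0 j true) (condD μ1 j true)).1
          + min P0 P1 * (chiW t0 (condD μ0 j false) (condD μ1 j false)).2
          + min (1 - P0) (1 - P1) * (chiW t1 (condD μ0 j true) (condD μ1 j true)).2 = _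
      rw [hF, hT, abs_min_id P0 P1]
      unfold chi
      ring

end Aux2

lemma main_aux {m : ℕ} (p : List Bool) :
    ∀ (B : DTree (Fin m) Bool) (μ0 μ1 : (Fin m → Bool) → ℝ),
    SubD μ0 → SubD μ1 → FullPair B μ0 μ1 →
    chi B μ0 μ1 =
      sInf { x : ℝ | ∃ T : DTree (Fin m) Bool, FullPair T μ0 μ1 ∧ x = chi T μ0 μ1 } →
    isPath p B → reachP p B μ0 ≠ 0 → reachP p B μ1 ≠ 0 →
    FullPair (subAt p B) (condAlong p B μ0) (condAlong p B μ1) ∧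
    chi (subAt p B) (condAlong p B μ0) (condAlong p B μ1) =
      sInf { x : ℝ | ∃ T : DTree (Fin m) Bool,
        FullPair T (condAlong p B μ0) (condAlong p B μ1) ∧
        x = chi T (condAlong p B μ0) (condAlong p B μ1) } := by
  induction p with
  | nil =>
    intro B μ0 μ1 _ _ hfull hopt _ _ _
    exact ⟨hfull, hopt⟩
  | cons b p ih =>
    intro B μ0 μ1 h0 h1 hfull hopt hp hr0 hr1
    cases B with
    | leaf s => exact absurd hp (by simp [isPath])
    | node j t0 t1 =>
      have hr0' : prb μ0 j b ≠ 0 ∧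
          reachP p (if b then t1 else t0) (condD μ0 j b) ≠ 0 := by
        have : prb μ0 j b * reachP p (if b then t1 else t0) (condD μ0 j b) ≠ 0 := hr0
        exact ⟨fun h => this (by rw [h, zero_mul]), fun h => this (by rw [h, mul_zero])⟩
      have hr1' : prb μ1 j b ≠ 0 ∧
          reachP p (if b then t1 else t0) (condD μ1 j b) ≠ 0 := by
        have : prb μ1 j b * reachP p (if b then t1 else t0) (condD μ1 j b) ≠ 0 := hr1
        exact ⟨fun h => this (by rw [h, zero_mul]), fun h => this (by rw [h, mul_zero])⟩
      obtain ⟨hF, hO⟩ := step_lemma j t0 t1 μ0 μ1 h0 h1 hfull hopt b hr0'.1 hr1'.1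
      exact ih (if b then t1 else t0) (condD μ0 j b) (condD μ1 j b)
        (subD_condD h0 j b) (subD_condD h1 j b) hF hO hp hr0'.2 hr1'.2

/-- Let `B` be an optimal tree for `(μ0,μ1)` (i.e. `(B,(μ0,μ1))` is full and
`χ(B,(μ0,μ1))` is minimal among full trees), where `supp(μ_b) ⊆ g⁻¹(b)`. If the subcube of a
node `v` of `B` (reached by the path `p`) has nonzero probability under both `μ0` and `μ1`,
then the subtree of `B` rooted at `v` is an optimal tree for `(μ0|v, μ1|v)`. -/
theorem subtree_optimal (m : ℕ) (g : Set ((Fin m → Bool) × Bool))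
    (μ0 μ1 : (Fin m → Bool) → ℝ)
    (hμ0 : IsDist μ0) (hμ1 : IsDist μ1)
    (hs0 : SuppIn μ0 (preim g false)) (hs1 : SuppIn μ1 (preim g true))
    (B : DTree (Fin m) Bool)
    (hfull : FullPair B μ0 μ1)
    (hopt : chi B μ0 μ1 =
      sInf { x : ℝ | ∃ T : DTree (Fin m) Bool, FullPair T μ0 μ1 ∧ x = chi T μ0 μ1 })
    (p : List Bool) (hp : isPath p B)
    (h0 : reachP p B μ0 ≠ 0) (h1 : reachP p B μ1 ≠ 0) :
    FullPair (subAt p B) (condAlong p B μ0) (condAlong p B μ1) ∧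
    chi (subAt p B) (condAlong p B μ0) (condAlong p B μ1) =
      sInf { x : ℝ | ∃ T : DTree (Fin m) Bool,
        FullPair T (condAlong p B μ0) (condAlong p B μ1) ∧
        x = chi T (condAlong p B μ0) (condAlong p B μ1) } := by
  exact main_aux p B μ0 μ1 ⟨hμ0.1, le_of_eq hμ0.2⟩ ⟨hμ1.1, le_of_eq hμ1.2⟩
    hfull hopt hp h0 h1
end
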